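/- Let (F[x],σ) be a difference ring where F is a field, x satisfies x^λ = 1 with 1, x, …, x^{λ−1} linearly independent over F, σ(x) = α·x for a primitive λ-th root of unity α ∈ const(F,σ), and K = const(F[x],σ) = const(F,σ) is a field. Then for f₁,…,f_d ∈ F[x], the equation σ(g) − g = c₁f₁ + ⋯ + c_d f_d with (c₁,…,c_d) ∈ K^d is equivalent, via coefficient comparison in the basis 1,x,…,x^{λ−1}, to the system of λ equations σ(g_i)·α^i − g_i = c₁ f_{1,i} + ⋯ + c_d f_{d,i} (0 ≤ i < λ), where g = Σ g_i x^i and f_j = Σ f_{j,i} x^i. -/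

import Mathlib

open scoped BigOperators

/-- In a root-of-unity extension `F[x]` (free over `F` with basis `1, x, …, x^{λ-1}`,
`x^λ = 1`, `σ(x) = α·x`) whose constants equal the constants of `F`, the parameterized
telescoping equation `σ(g) − g = Σ_j c_j f_j` is equivalent, by coefficient comparison,
to the system `σ(g_i)·α^i − g_i = Σ_j c_j f_{j,i}` for `0 ≤ i < λ`. -/
theorem telescoping_coefficient_comparison {F E : Type*} [Field F] [CommRing E]
    [Algebra F E] (σ : F ≃+* F) (lam : ℕ) (hlam : 1 < lam)
    (α : F) (hαconst : σ α = α) (hα : α ^ lam = 1)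
    (hαmin : ∀ m : ℕ, 0 < m → m < lam → α ^ m ≠ 1)
    (x : E) (hx : x ^ lam = 1)
    (bas : Module.Basis (Fin lam) F E) (hbas : ∀ i : Fin lam, bas i = x ^ (i : ℕ))
    (τ : E ≃+* E) (hτa : ∀ a : F, τ (algebraMap F E a) = algebraMap F E (σ a))
    (hτx : τ x = algebraMap F E α * x)
    (hconst : ∀ e : E, τ e = e → ∃ c : F, σ c = c ∧ e = algebraMap F E c)
    (d : ℕ) (f : Fin d → Fin lam → F) (c : Fin d → F) (hc : ∀ j, σ (c j) = c j)
    (g : Fin lam → F) :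
    τ (∑ i : Fin lam, algebraMap F E (g i) * x ^ (i : ℕ)) -
        ∑ i : Fin lam, algebraMap F E (g i) * x ^ (i : ℕ) =
      ∑ j : Fin d, algebraMap F E (c j) *
        ∑ i : Fin lam, algebraMap F E (f j i) * x ^ (i : ℕ) ↔
    ∀ i : Fin lam, σ (g i) * α ^ (i : ℕ) - g i = ∑ j : Fin d, c j * f j i := by
  have hzero : ∀ v : Fin lam → F,
      (∑ i : Fin lam, algebraMap F E (v i) * x ^ (i : ℕ)) = 0 ↔ ∀ i, v i = 0 := by
    intro v
    have hs : (∑ i : Fin lam, algebraMap F E (v i) * x ^ (i : ℕ)) = ∑ i, v i • bas i := by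
      refine Finset.sum_congr rfl fun i _ => ?_
      rw [hbas, Algebra.smul_def]
    rw [hs]
    exact ⟨fun h => Fintype.linearIndependent_iff.mp bas.linearIndependent v h,
      fun h => by simp [h]⟩
  have hτterm : ∀ (i : Fin lam) (a : F),
      τ (algebraMap F E a * x ^ (i : ℕ))
        = algebraMap F E (σ a * α ^ (i : ℕ)) * x ^ (i : ℕ) := by
    intro i a
    rw [map_mul, hτa, map_pow, hτx, mul_pow, map_mul, map_pow]
    ring
  have hdouble : (∑ j : Fin d, algebraMap F E (c j) *
        ∑ i : Fin lam, algebraMap F E (f j i) * x ^ (i : ℕ))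
      = ∑ i : Fin lam, algebraMap F E (∑ j : Fin d, c j * f j i) * x ^ (i : ℕ) := by
    simp only [Finset.mul_sum]
    rw [Finset.sum_comm]
    refine Finset.sum_congr rfl fun i _ => ?_
    rw [map_sum, Finset.sum_mul]
    refine Finset.sum_congr rfl fun j _ => ?_
    rw [map_mul]
    ring
  have key : τ (∑ i : Fin lam, algebraMap F E (g i) * x ^ (i : ℕ)) -
      (∑ i : Fin lam, algebraMap F E (g i) * x ^ (i : ℕ)) -
      (∑ j : Fin d, algebraMap F E (c j) *
        ∑ i : Fin lam, algebraMap F E (f j i) * x ^ (i : ℕ))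
      = ∑ i : Fin lam,
          algebraMap F E (σ (g i) * α ^ (i : ℕ) - g i - ∑ j : Fin d, c j * f j i)
            * x ^ (i : ℕ) := by
    rw [map_sum, hdouble]
    simp only [hτterm]
    rw [← Finset.sum_sub_distrib, ← Finset.sum_sub_distrib]
    refine Finset.sum_congr rfl fun i _ => ?_
    rw [map_sub, map_sub]
    ring
  constructor
  · intro h i
    have h0 := (hzero _).mp (by rw [← key]; rw [h]; ring)
    exact sub_eq_zero.mp (h0 i)
  · intro h
    have h0 : ∀ i : Fin lam,
        σ (g i) * α ^ (i : ℕ) - g i - ∑ j : Fin d, c j * f j i = 0 := fun i =>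
      sub_eq_zero.mpr (h i)
    exact sub_eq_zero.mp (by rw [key]; exact (hzero _).mpr h0)
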